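/- Let P₀, P₁, ..., Pₙ be points in ℝ³ forming an open piecewise linear curve in which consecutive points are distinct. For 1 ≤ m ≤ n−1 let αₘ ∈ [0, π] be the exterior angle at Pₘ, i.e., the angle between the vectors Pₘ − Pₘ₋₁ and Pₘ₊₁ − Pₘ. If the sum α₁ + ⋯ + αₙ₋₁ < π, then the PL curve is simple, i.e., the associated piecewise linear path from P₀ to Pₙ is injective. -/

import Mathlib

open InnerProductGeometry Real

section AuxLemmas

variable {V : Type*} [NormedAddCommGroup V] [InnerProductSpace ℝ V]

local notation "⟪" x ", " y "⟫" => @inner ℝ _ _ x y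

lemma inner_of_unit {x y : V} (hx : ‖x‖ = 1) (hy : ‖y‖ = 1) :
    ⟪x, y⟫ = Real.cos (angle x y) := by
  rw [cos_angle, hx, hy]; simp

lemma angle_eq_arccos_of_unit {x y : V} (hx : ‖x‖ = 1) (hy : ‖y‖ = 1) :
    angle x y = Real.arccos ⟪x, y⟫ := by
  rw [angle, hx, hy]; simp

lemma angle_triangle_unit {x y z : V} (hx : ‖x‖ = 1) (hy : ‖y‖ = 1) (hz : ‖z‖ = 1) :
    angle x z ≤ angle x y + angle y z := by
  by_cases h : Real.pi ≤ angle x y + angle y z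
  · exact le_trans (angle_le_pi x z) h
  push_neg at h
  set a := angle x y with ha
  set b := angle y z with hb
  have ha0 : 0 ≤ a := angle_nonneg _ _
  have hb0 : 0 ≤ b := angle_nonneg _ _
  have haπ : a ≤ π := angle_le_pi _ _
  have hbπ : b ≤ π := angle_le_pi _ _
  have hxy : ⟪x, y⟫ = Real.cos a := inner_of_unit hx hy
  have hyz : ⟪y, z⟫ = Real.cos b := inner_of_unit hy hz
  have hyy : ⟪y, y⟫ = (1:ℝ) := by
    rw [real_inner_self_eq_norm_sq, hy]; norm_num
  have hyx : ⟪y, x⟫ = Real.cos a := by rw [real_inner_comm]; exact hxy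
  have hzy : ⟪z, y⟫ = Real.cos b := by rw [real_inner_comm]; exact hyz
  have hxx : ⟪x, x⟫ = (1:ℝ) := by rw [real_inner_self_eq_norm_sq, hx]; norm_num
  have hzz : ⟪z, z⟫ = (1:ℝ) := by rw [real_inner_self_eq_norm_sq, hz]; norm_num
  have key : Real.cos (a + b) ≤ ⟪x, z⟫ := by
    set x' : V := x - Real.cos a • y with hx'
    set z' : V := z - Real.cos b • y with hz'
    have hnx' : ‖x'‖ = Real.sin a := by
      have h1 : ‖x'‖ ^ 2 = Real.sin a ^ 2 := by
        rw [← real_inner_self_eq_norm_sq, hx']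
        have hs := Real.sin_sq_add_cos_sq a
        simp only [inner_sub_left, inner_sub_right, real_inner_smul_left,
          real_inner_smul_right, hyy, hxy, hyx, hxx]
        nlinarith
      have := Real.sin_nonneg_of_nonneg_of_le_pi ha0 haπ
      nlinarith [norm_nonneg x']
    have hnz' : ‖z'‖ = Real.sin b := by
      have h1 : ‖z'‖ ^ 2 = Real.sin b ^ 2 := by
        rw [← real_inner_self_eq_norm_sq, hz']
        have hs := Real.sin_sq_add_cos_sq b
        simp only [inner_sub_left, inner_sub_right, real_inner_smul_left,
          real_inner_smul_right, hyy, hyz, hzy, hzz]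
        nlinarith
      have := Real.sin_nonneg_of_nonneg_of_le_pi hb0 hbπ
      nlinarith [norm_nonneg z']
    have hdecomp : ⟪x, z⟫ = ⟪x', z'⟫ + Real.cos a * Real.cos b := by
      simp only [hx', hz', inner_sub_left, inner_sub_right, real_inner_smul_left,
        real_inner_smul_right, hyy, hxy, hyz, hyx, hzy]
      ring
    have hcs : |⟪x', z'⟫| ≤ ‖x'‖ * ‖z'‖ := abs_real_inner_le_norm x' z'
    rw [Real.cos_add, hdecomp]
    rw [hnx', hnz'] at hcs
    have := abs_le.mp hcs
    linarith [this.1]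
  rw [angle_eq_arccos_of_unit hx hz]
  have h1 : Real.arccos ⟪x, z⟫ ≤ Real.arccos (Real.cos (a + b)) := by
    unfold Real.arccos
    have : Real.arcsin (Real.cos (a+b)) ≤ Real.arcsin ⟪x, z⟫ :=
      Real.monotone_arcsin key
    linarith
  rwa [Real.arccos_cos (by linarith) (le_of_lt h)] at h1

lemma exists_geodesic {x y : V} (hx : ‖x‖ = 1) (hy : ‖y‖ = 1)
    (h0 : 0 < angle x y) (hπ : angle x y < Real.pi) {β : ℝ} (hβ0 : 0 ≤ β)
    (hβ : β ≤ angle x y) :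
    ∃ z : V, ‖z‖ = 1 ∧ angle z x = β ∧ angle z y = angle x y - β := by
  set θ := angle x y with hθ
  have hθπ : θ ≤ π := angle_le_pi _ _
  have hsθ : 0 < Real.sin θ := Real.sin_pos_of_pos_of_lt_pi h0 hπ
  have hxy : ⟪x, y⟫ = Real.cos θ := inner_of_unit hx hy
  have hyx : ⟪y, x⟫ = Real.cos θ := by rw [real_inner_comm]; exact hxy
  have hxx : ⟪x, x⟫ = (1:ℝ) := by rw [real_inner_self_eq_norm_sq, hx]; norm_num
  have hyy : ⟪y, y⟫ = (1:ℝ) := by rw [real_inner_self_eq_norm_sq, hy]; norm_num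
  set z : V := (Real.sin (θ - β) / Real.sin θ) • x + (Real.sin β / Real.sin θ) • y with hzdef
  have hzx : ⟪z, x⟫ = Real.cos β := by
    simp only [hzdef, inner_add_left, real_inner_smul_left, hxx, hyx]
    rw [Real.sin_sub]
    field_simp
    ring
  have hzy : ⟪z, y⟫ = Real.cos (θ - β) := by
    simp only [hzdef, inner_add_left, real_inner_smul_left, hxy, hyy]
    have h5 := Real.sin_sub θ β
    have h6 := Real.cos_sub θ β
    have h7 := Real.sin_sq_add_cos_sq θ
    field_simp
    linear_combination Real.cos θ * h5 - Real.sin θ * h6 - Real.sin β * h7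
  have hzz : ⟪z, z⟫ = (1:ℝ) := by
    have : ⟪z, z⟫ = (Real.sin (θ - β) / Real.sin θ) * ⟪x, z⟫
        + (Real.sin β / Real.sin θ) * ⟪y, z⟫ := by
      rw [hzdef]
      simp only [inner_add_left, real_inner_smul_left]
    have haux1 : ⟪x, z⟫ = Real.cos β := by rw [real_inner_comm]; exact hzx
    have haux2 : ⟪y, z⟫ = Real.cos (θ - β) := by rw [real_inner_comm]; exact hzy
    rw [this, haux1, haux2]
    have h5 := Real.sin_add (θ - β) β
    have h6 : θ - β + β = θ := by ring
    rw [h6] at h5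
    field_simp
    linarith [h5]
  have hnz : ‖z‖ = 1 := by
    have := real_inner_self_eq_norm_sq z
    nlinarith [norm_nonneg z]
  refine ⟨z, hnz, ?_, ?_⟩
  · rw [angle_eq_arccos_of_unit hnz hx, hzx, Real.arccos_cos hβ0 (by linarith)]
  · rw [angle_eq_arccos_of_unit hnz hy, hzy,
      Real.arccos_cos (by linarith) (by linarith)]

lemma chain_lemma (k : ℕ) (u : ℕ → V) (hu : ∀ i ≤ k, ‖u i‖ = 1)
    (hS : ∑ i ∈ Finset.range k, angle (u i) (u (i + 1)) < Real.pi) :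
    ∃ v : V, ‖v‖ = 1 ∧ ∀ i ≤ k,
      angle v (u i) ≤ (∑ i ∈ Finset.range k, angle (u i) (u (i + 1))) / 2 := by
  induction k with
  | zero =>
    have hne : u 0 ≠ 0 := fun h => by simpa [h] using hu 0 le_rfl
    refine ⟨u 0, hu 0 le_rfl, fun i hi => ?_⟩
    interval_cases i
    simp [angle_self hne]
  | succ k ih =>
    have hnn : ∀ j ∈ Finset.range (k+1), 0 ≤ angle (u j) (u (j+1)) :=
      fun j _ => angle_nonneg _ _
    rw [Finset.sum_range_succ] at hS ⊢
    have hS' : ∑ i ∈ Finset.range k, angle (u i) (u (i + 1)) < Real.pi := by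
      have hα : 0 ≤ angle (u k) (u (k+1)) := angle_nonneg _ _
      linarith
    obtain ⟨v, hv1, hv2⟩ := ih (fun i hi => hu i (le_trans hi (Nat.le_succ k))) hS'
    set S' := ∑ i ∈ Finset.range k, angle (u i) (u (i + 1)) with hS'def
    set α := angle (u k) (u (k+1)) with hαdef
    have hα0 : 0 ≤ α := angle_nonneg _ _
    have hS'0 : 0 ≤ S' := Finset.sum_nonneg fun j _ => angle_nonneg _ _
    have huk : ‖u k‖ = 1 := hu k (Nat.le_succ k)
    have huk1 : ‖u (k+1)‖ = 1 := hu (k+1) le_rfl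
    have htri : angle v (u (k+1)) ≤ S'/2 + α := by
      calc angle v (u (k+1)) ≤ angle v (u k) + angle (u k) (u (k+1)) :=
            angle_triangle_unit hv1 huk huk1
        _ ≤ S'/2 + α := by
            have := hv2 k le_rfl
            linarith
    by_cases hc : angle v (u (k+1)) ≤ α/2
    · refine ⟨u (k+1), huk1, ?_⟩
      intro i hi
      rcases Nat.lt_succ_iff_lt_or_eq.mp (Nat.lt_succ_of_le hi) with hi' | hi'
      · have hi'' : i ≤ k := Nat.lt_succ_iff.mp hi'
        calc angle (u (k+1)) (u i) ≤ angle (u (k+1)) v + angle v (u i) :=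
              angle_triangle_unit huk1 hv1 (hu i (le_trans hi'' (Nat.le_succ k)))
          _ ≤ α/2 + S'/2 := by
              rw [angle_comm]
              linarith [hv2 i hi'']
          _ ≤ (S' + α)/2 := by linarith
      · rw [hi']
        rw [angle_self (by intro h; rw [h] at huk1; simp at huk1 : u (k+1) ≠ 0)]
        linarith
    · push_neg at hc
      have hθ0 : 0 < angle v (u (k+1)) := lt_of_le_of_lt (by linarith) hc
      have hθπ : angle v (u (k+1)) < Real.pi := by linarith
      obtain ⟨z, hz1, hz2, hz3⟩ := exists_geodesic hv1 huk1 hθ0 hθπ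
        (by linarith : (0:ℝ) ≤ α/2) (le_of_lt hc)
      refine ⟨z, hz1, ?_⟩
      intro i hi
      rcases Nat.lt_succ_iff_lt_or_eq.mp (Nat.lt_succ_of_le hi) with hi' | hi'
      · have hi'' : i ≤ k := Nat.lt_succ_iff.mp hi'
        calc angle z (u i) ≤ angle z v + angle v (u i) :=
              angle_triangle_unit hz1 hv1 (hu i (le_trans hi'' (Nat.le_succ k)))
          _ ≤ α/2 + S'/2 := by linarith [hv2 i hi'', hz2]
          _ ≤ (S' + α)/2 := by linarith
      · rw [hi', hz3]
        linarith [htri]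

end AuxLemmas

/-- Uniform piecewise linear parametrization over `[0,1]` of the PL curve with
vertices `P 0, P 1, …, P n`. -/
noncomputable def plParam (n : ℕ) (P : ℕ → EuclideanSpace ℝ (Fin 3)) (t : ℝ) :
    EuclideanSpace ℝ (Fin 3) :=
  let j := min (n - 1) ⌊t * n⌋₊
  P j + (t * n - j) • (P (j + 1) - P j)

theorem stmt_0 (n : ℕ) (hn : 1 ≤ n) (P : ℕ → EuclideanSpace ℝ (Fin 3))
    (hdist : ∀ m < n, P m ≠ P (m + 1))
    (hsum : ∑ m ∈ Finset.Ico 1 n, angle (P m - P (m - 1)) (P (m + 1) - P m) < Real.pi) :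
    Set.InjOn (plParam n P) (Set.Icc 0 1) := by
  classical
  set e : ℕ → EuclideanSpace ℝ (Fin 3) := fun m => P (m + 1) - P m with he
  have hene : ∀ m < n, e m ≠ 0 := fun m hm => sub_ne_zero.mpr (Ne.symm (hdist m hm))
  set u : ℕ → EuclideanSpace ℝ (Fin 3) := fun m => ‖e m‖⁻¹ • e m with hudef
  have hu : ∀ i ≤ n - 1, ‖u i‖ = 1 := by
    intro i hi
    have hin : i < n := lt_of_le_of_lt hi (Nat.sub_lt hn one_pos)
    have h0 : e i ≠ 0 := hene i hin
    rw [hudef]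
    simp only [norm_smul, norm_inv, norm_norm]
    exact inv_mul_cancel₀ (norm_ne_zero_iff.mpr h0)
  have hangle : ∀ i, i + 1 ≤ n - 1 → angle (u i) (u (i + 1)) = angle (e i) (e (i + 1)) := by
    intro i hi
    have hi1 : i + 1 < n := lt_of_le_of_lt hi (Nat.sub_lt hn one_pos)
    have hi0 : i < n := by omega
    rw [hudef]
    simp only
    rw [angle_smul_left_of_pos _ _ (inv_pos.mpr (norm_pos_iff.mpr (hene i hi0))),
      angle_smul_right_of_pos _ _ (inv_pos.mpr (norm_pos_iff.mpr (hene (i+1) hi1)))]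
  have hsum' : ∑ i ∈ Finset.range (n - 1), angle (u i) (u (i + 1)) < Real.pi := by
    have h1 : ∑ m ∈ Finset.Ico 1 n, angle (P m - P (m - 1)) (P (m + 1) - P m)
        = ∑ i ∈ Finset.range (n - 1), angle (e i) (e (i + 1)) := by
      rw [Finset.sum_Ico_eq_sum_range]
      apply Finset.sum_congr rfl
      intro i _
      have e1 : 1 + i - 1 = i := by omega
      have e2 : 1 + i + 1 = i + 1 + 1 := by omega
      have e3 : 1 + i = i + 1 := by omega
      rw [e1, e2, e3, he]
    have h2 : ∑ i ∈ Finset.range (n - 1), angle (e i) (e (i + 1))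
        = ∑ i ∈ Finset.range (n - 1), angle (u i) (u (i + 1)) := by
      apply Finset.sum_congr rfl
      intro i hi
      exact (hangle i (by simpa using Finset.mem_range.mp hi)).symm
    rw [h1, h2] at hsum
    exact hsum
  obtain ⟨v, hv1, hv2⟩ := chain_lemma (n - 1) u hu hsum'
  set S := ∑ i ∈ Finset.range (n - 1), angle (u i) (u (i + 1)) with hSdef
  have hS0 : 0 ≤ S := Finset.sum_nonneg fun j _ => angle_nonneg _ _
  have hpos : ∀ m < n, (0:ℝ) < @inner ℝ _ _ v (e m) := by
    intro m hm
    have hm' : m ≤ n - 1 := by omega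
    have hiu : @inner ℝ _ _ v (u m) = Real.cos (angle v (u m)) :=
      inner_of_unit hv1 (hu m hm')
    have hcos : (0:ℝ) < Real.cos (angle v (u m)) := by
      apply Real.cos_pos_of_mem_Ioo
      constructor
      · linarith [angle_nonneg v (u m), Real.pi_pos]
      · linarith [hv2 m hm']
    have h9 : @inner ℝ _ _ v (u m) = ‖e m‖⁻¹ * @inner ℝ _ _ v (e m) := by
      simp only [hudef]; exact real_inner_smul_right v (e m) _
    have hne0 : (0:ℝ) < ‖e m‖ := norm_pos_iff.mpr (hene m hm)
    rw [h9] at hiu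
    by_contra hX
    push_neg at hX
    nlinarith [inv_pos.mpr hne0]
  -- strict monotonicity of t ↦ ⟪v, plParam n P t⟫
  have hexp : ∀ r : ℝ, plParam n P r
      = P (min (n-1) ⌊r * n⌋₊) + (r * n - (min (n-1) ⌊r * n⌋₊ : ℕ)) •
        (P (min (n-1) ⌊r * n⌋₊ + 1) - P (min (n-1) ⌊r * n⌋₊)) := fun r => rfl
  have hstep : ∀ m < n, @inner ℝ _ _ v (P m) < @inner ℝ _ _ v (P (m + 1)) := by
    intro m hm
    have := hpos m hm
    rw [he] at this
    simp only [inner_sub_right] at this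
    linarith
  have hmono : ∀ a b : ℕ, a ≤ b → b ≤ n → @inner ℝ _ _ v (P a) ≤ @inner ℝ _ _ v (P b) := by
    intro a b hab hbn
    induction b with
    | zero => simp_all
    | succ b ih =>
      rcases Nat.lt_succ_iff_lt_or_eq.mp (Nat.lt_succ_of_le hab) with h | h
      · exact le_trans (ih (by omega) (by omega)) (le_of_lt (hstep b (by omega)))
      · rw [h]
  have key : ∀ s t : ℝ, s ∈ Set.Icc (0:ℝ) 1 → t ∈ Set.Icc (0:ℝ) 1 → s < t →
      @inner ℝ _ _ v (plParam n P s) < @inner ℝ _ _ v (plParam n P t) := by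
    intro s t hs ht hst
    set js := min (n-1) ⌊s * n⌋₊ with hjs
    set jt := min (n-1) ⌊t * n⌋₊ with hjt
    have hjsn : js < n := lt_of_le_of_lt (min_le_left _ _) (Nat.sub_lt hn one_pos)
    have hjtn : jt < n := lt_of_le_of_lt (min_le_left _ _) (Nat.sub_lt hn one_pos)
    have hjle : js ≤ jt := by
      apply min_le_min le_rfl
      apply Nat.floor_mono
      exact mul_le_mul_of_nonneg_right (le_of_lt hst) (Nat.cast_nonneg n)
    have hgs : @inner ℝ _ _ v (plParam n P s)
        = @inner ℝ _ _ v (P js) + (s * n - js) * @inner ℝ _ _ v (e js) := by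
      rw [hexp s, inner_add_right, real_inner_smul_right, he]
    have hgt : @inner ℝ _ _ v (plParam n P t)
        = @inner ℝ _ _ v (P jt) + (t * n - jt) * @inner ℝ _ _ v (e jt) := by
      rw [hexp t, inner_add_right, real_inner_smul_right, he]
    have hsle : (js:ℝ) ≤ s * n := by
      have h1 : (js:ℝ) ≤ (⌊s * n⌋₊ : ℝ) := Nat.cast_le.mpr (min_le_right _ _)
      have h2 : (⌊s * n⌋₊ : ℝ) ≤ s * n :=
        Nat.floor_le (mul_nonneg hs.1 (Nat.cast_nonneg n))
      linarith
    have htle : (jt:ℝ) ≤ t * n := by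
      have h1 : (jt:ℝ) ≤ (⌊t * n⌋₊ : ℝ) := Nat.cast_le.mpr (min_le_right _ _)
      have h2 : (⌊t * n⌋₊ : ℝ) ≤ t * n :=
        Nat.floor_le (mul_nonneg ht.1 (Nat.cast_nonneg n))
      linarith
    rcases eq_or_lt_of_le hjle with heq | hlt
    · -- same segment
      rw [hgs, hgt, ← heq]
      have hn1 : (1:ℝ) ≤ (n:ℝ) := by exact_mod_cast hn
      have hp := hpos js hjsn
      have h4 : (s * n - js) * @inner ℝ _ _ v (e js)
          < (t * n - js) * @inner ℝ _ _ v (e js) := by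
        apply mul_lt_mul_of_pos_right _ hp
        nlinarith
      linarith
    · -- different segments
      have hjsf : js = ⌊s * n⌋₊ := by
        rcases min_cases (n-1) ⌊s * n⌋₊ with ⟨h1, h2⟩ | ⟨h1, h2⟩
        · omega
        · exact h1
      have hslt : s * n < js + 1 := by
        rw [hjsf]
        exact Nat.lt_floor_add_one _
      have h1 : @inner ℝ _ _ v (plParam n P s) < @inner ℝ _ _ v (P (js + 1)) := by
        rw [hgs]
        have hp := hpos js hjsn
        have : (s * n - js) * @inner ℝ _ _ v (e js) < 1 * @inner ℝ _ _ v (e js) := by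
          apply mul_lt_mul_of_pos_right _ hp
          linarith
        have he' : @inner ℝ _ _ v (e js)
            = @inner ℝ _ _ v (P (js + 1)) - @inner ℝ _ _ v (P js) := by
          rw [he]; simp [inner_sub_right]
        linarith [this, he' ▸ this]
      have h2 : @inner ℝ _ _ v (P (js + 1)) ≤ @inner ℝ _ _ v (P jt) :=
        hmono (js + 1) jt hlt (le_of_lt hjtn)
      have h3 : @inner ℝ _ _ v (P jt) ≤ @inner ℝ _ _ v (plParam n P t) := by
        rw [hgt]
        have hp := hpos jt hjtn
        have h4 : (0:ℝ) ≤ (t * n - jt) * @inner ℝ _ _ v (e jt) :=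
          mul_nonneg (by linarith) hp.le
        linarith
      linarith
  intro s hs t ht heq
  by_contra hne
  rcases lt_or_gt_of_ne hne with h | h
  · exact absurd (congrArg (fun w => @inner ℝ _ _ v w) heq)
      (ne_of_lt (key s t hs ht h))
  · exact absurd (congrArg (fun w => @inner ℝ _ _ v w) heq)
      (ne_of_gt (key t s ht hs h))
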